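/- Suppose B is an observation reach-avoid barrier function (ORBF) with level p for the target set T, and let τ := inf{n ∈ ℕ : X_n ∈ U ∪ T}. Then for every N ∈ ℕ, ℙ(τ ≤ N, X_τ ∈ U, and X_{t_i} ∈ O_i for every i ∈ {1,…,k} with t_i < τ) ≤ p. -/

import Mathlib

open MeasureTheory
open scoped Classical

/-- The (extended-natural-valued) first hitting time of a set `S` by the process `X`:
`τ(ω) = inf {n : ℕ | X n ω ∈ S}`, equal to `∞` if `X` never enters `S`. -/
noncomputable def hitTime {Ω 𝒳 : Type*} (X : ℕ → Ω → 𝒳) (S : Set 𝒳) (ω : Ω) : ℕ∞ :=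
  ⨅ (n : ℕ) (_ : X n ω ∈ S), (n : ℕ∞)

/-- Auxiliary "stopped and killed" process used in the proof of the ORBF guarantee:
it follows `B n (X n ω)` while the process has not hit `W = U ∪ T` and all past
observations succeeded; it is killed (set to `0`) once an observation strictly before
the hitting time fails, and it is frozen once the process hits `W`. -/
noncomputable def ORBFaux {Ω 𝒳 : Type*} (X : ℕ → Ω → 𝒳) (W : Set 𝒳)
    {k : ℕ} (t : Fin (k + 1) → ℕ) (O : Fin (k + 1) → Set 𝒳) (B : ℕ → 𝒳 → ℝ) :
    ℕ → Ω → ℝ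
  | 0, ω => B 0 (X 0 ω)
  | (n + 1), ω =>
      if ∃ i, t i ≤ n ∧ (∀ m ≤ t i, X m ω ∉ W) ∧ X (t i) ω ∉ O i then 0
      else if ∃ m ≤ n, X m ω ∈ W then ORBFaux X W t O B n ω
      else B (n + 1) (X (n + 1) ω)

/-- If `B` is an ORBF with level `p` for the target set `T` and
`τ = inf {n | X_n ∈ U ∪ T}`, then for every `N`,
`ℙ(τ ≤ N, X_τ ∈ U, and X_{t_i} ∈ O_i for every i with t_i < τ) ≤ p`. -/
theorem orbf_bounded_time_guarantee
    {Ω : Type*} {m0 : MeasurableSpace Ω} (ℙ : Measure Ω) [IsProbabilityMeasure ℙ]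
    (𝓕 : Filtration ℕ m0)
    {𝒳 : Type*} [MeasurableSpace 𝒳]
    (X : ℕ → Ω → 𝒳) (hX_adapted : ∀ n, Measurable[𝓕 n] (X n))
    (x₀ : 𝒳) (hX0 : ∀ᵐ ω ∂ℙ, X 0 ω = x₀)
    (U : Set 𝒳) (hU : MeasurableSet U)
    (T : Set 𝒳) (hT : MeasurableSet T) (hUT : Disjoint U T)
    (k : ℕ) (t : Fin (k + 1) → ℕ) (ht : StrictMono t)
    (O : Fin (k + 1) → Set 𝒳) (hO : ∀ i, MeasurableSet (O i))
    (B : ℕ → 𝒳 → ℝ)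
    (hB_meas : ∀ n, Measurable (B n))
    (hB_bdd : ∀ n, ∃ C : ℝ, ∀ x, |B n x| ≤ C)
    (p : ℝ)
    -- (i) nonnegativity
    (h_nonneg : ∀ n, ∀ x : 𝒳, 0 ≤ B n x)
    -- (ii) initial condition
    (h_init : B 0 x₀ ≤ p)
    -- (iii) barrier at least 1 on the unsafe set
    (h_unsafe : ∀ n, ∀ x ∈ U, 1 ≤ B n x)
    -- (iv) supermartingale (drift) condition on `G n \ T`, for `n ≤ t_k`
    (h_drift₁ : ∀ n ≤ t (Fin.last k), ∀ᵐ ω ∂ℙ,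
      (X n ω ∉ U ∧ X n ω ∉ T ∧ ∀ i, t i = n → X n ω ∈ O i) →
        (ℙ[fun ω' => B (n + 1) (X (n + 1) ω') | 𝓕 n]) ω ≤ B n (X n ω))
    -- (v) supermartingale (drift) condition outside `U ∪ T`, for `n > t_k`
    (h_drift₂ : ∀ n, t (Fin.last k) < n → ∀ᵐ ω ∂ℙ,
      X n ω ∉ U ∪ T → (ℙ[fun ω' => B (n + 1) (X (n + 1) ω') | 𝓕 n]) ω ≤ B n (X n ω)) :
    ∀ N : ℕ,
      ℙ {ω | hitTime X (U ∪ T) ω ≤ (N : ℕ∞) ∧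
          X ((hitTime X (U ∪ T) ω).toNat) ω ∈ U ∧
          ∀ i, (t i : ℕ∞) < hitTime X (U ∪ T) ω → X (t i) ω ∈ O i} ≤
        ENNReal.ofReal p := by
  intro N
  set W : Set 𝒳 := U ∪ T with hW
  have hWm : MeasurableSet W := hU.union hT
  have hXm : ∀ n, Measurable (X n) := fun n => (hX_adapted n).mono (𝓕.le n) le_rfl
  set f : ℕ → Ω → ℝ := ORBFaux X W t O B with hf
  have hp0 : 0 ≤ p := (h_nonneg 0 x₀).trans h_init
  -- nonnegativity of f
  have hf_nonneg : ∀ n ω, 0 ≤ f n ω := by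
    intro n
    induction n with
    | zero => intro ω; exact h_nonneg 0 _
    | succ n ih =>
      intro ω
      rw [hf]
      simp only [ORBFaux]
      split_ifs with h1 h2
      · exact le_rfl
      · exact ih ω
      · exact h_nonneg _ _
  -- measurability of the two guard sets with respect to 𝓕 n
  have hD1 : ∀ n, MeasurableSet[𝓕 n]
      {ω | ∃ i, t i ≤ n ∧ (∀ m ≤ t i, X m ω ∉ W) ∧ X (t i) ω ∉ O i} := by
    intro n
    have heq : {ω | ∃ i, t i ≤ n ∧ (∀ m ≤ t i, X m ω ∉ W) ∧ X (t i) ω ∉ O i}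
        = ⋃ i, ⋃ (_ : t i ≤ n),
            ((⋂ m, ⋂ (_ : m ≤ t i), X m ⁻¹' Wᶜ) ∩ X (t i) ⁻¹' (O i)ᶜ) := by
      ext ω
      simp only [Set.mem_iUnion, Set.mem_iInter, Set.mem_inter_iff, Set.mem_preimage,
        Set.mem_compl_iff, Set.mem_setOf_eq]
      tauto
    rw [heq]
    refine MeasurableSet.iUnion fun i => MeasurableSet.iUnion fun hi => MeasurableSet.inter ?_ ?_
    · exact MeasurableSet.iInter fun m => MeasurableSet.iInter fun hm =>
        ((hX_adapted m).mono (𝓕.mono (hm.trans hi)) le_rfl) hWm.compl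
    · exact ((hX_adapted (t i)).mono (𝓕.mono hi) le_rfl) (hO i).compl
  have hD2 : ∀ n, MeasurableSet[𝓕 n] {ω | ∃ m ≤ n, X m ω ∈ W} := by
    intro n
    have heq : {ω | ∃ m ≤ n, X m ω ∈ W} = ⋃ m, ⋃ (_ : m ≤ n), X m ⁻¹' W := by
      ext ω; simp [Set.mem_iUnion]
    rw [heq]
    exact MeasurableSet.iUnion fun m => MeasurableSet.iUnion fun hm =>
      ((hX_adapted m).mono (𝓕.mono hm) le_rfl) hWm
  -- measurability of f
  have hf_meas : ∀ n, Measurable (f n) := by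
    intro n
    induction n with
    | zero => exact (hB_meas 0).comp (hXm 0)
    | succ n ih =>
      rw [hf]
      simp only [ORBFaux]
      refine Measurable.ite (𝓕.le n _ (hD1 n)) measurable_const ?_
      refine Measurable.ite (𝓕.le n _ (hD2 n)) ?_ ((hB_meas _).comp (hXm _))
      rw [hf] at ih; exact ih
  -- boundedness of f
  have hf_bdd : ∀ n, ∃ C : ℝ, ∀ ω, |f n ω| ≤ C := by
    intro n
    induction n with
    | zero => obtain ⟨C, hC⟩ := hB_bdd 0; exact ⟨C, fun ω => hC _⟩
    | succ n ih =>
      obtain ⟨C, hC⟩ := ih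
      obtain ⟨C', hC'⟩ := hB_bdd (n + 1)
      refine ⟨max C C', fun ω => ?_⟩
      rw [hf]
      simp only [ORBFaux]
      split_ifs with h1 h2
      · simpa using le_max_of_le_left ((abs_nonneg (f n ω)).trans (hC ω))
      · rw [← hf]; exact le_max_of_le_left (hC ω)
      · exact le_max_of_le_right (hC' (X (n + 1) ω))
  -- integrability of f
  have hf_int : ∀ n, Integrable (f n) ℙ := by
    intro n
    obtain ⟨C, hC⟩ := hf_bdd n
    exact (integrable_const C).mono' (hf_meas n).aestronglyMeasurable
      (Filter.Eventually.of_forall fun ω => by simpa using hC ω)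
  -- f equals B on the "alive" region
  have hval : ∀ n ω, (∀ m < n, X m ω ∉ W) →
      (∀ i, t i < n → X (t i) ω ∈ O i) → f n ω = B n (X n ω) := by
    intro n ω hh ho
    cases n with
    | zero => rfl
    | succ n =>
      have h1 : ¬∃ i, t i ≤ n ∧ (∀ m ≤ t i, X m ω ∉ W) ∧ X (t i) ω ∉ O i := by
        rintro ⟨i, hi, _, hOi⟩
        exact hOi (ho i (Nat.lt_succ_of_le hi))
      have h2 : ¬∃ m ≤ n, X m ω ∈ W := by
        rintro ⟨m, hm, hmem⟩
        exact hh m (Nat.lt_succ_of_le hm) hmem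
      rw [hf]
      simp only [ORBFaux]
      rw [if_neg h1, if_neg h2]
  -- one-step decrease of the expectation
  have hstep : ∀ n, ∫ ω, f (n + 1) ω ∂ℙ ≤ ∫ ω, f n ω ∂ℙ := by
    intro n
    set D1 : Set Ω := {ω | ∃ i, t i ≤ n ∧ (∀ m ≤ t i, X m ω ∉ W) ∧ X (t i) ω ∉ O i}
      with hD1def
    set D2 : Set Ω := {ω | ∃ m ≤ n, X m ω ∈ W} with hD2def
    set E : Set Ω := D1ᶜ ∩ D2 with hEdef
    set C : Set Ω := D1ᶜ ∩ D2ᶜ with hCdef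
    have hEm0 : MeasurableSet E := (𝓕.le n _ (hD1 n)).compl.inter (𝓕.le n _ (hD2 n))
    have hCF : MeasurableSet[𝓕 n] C := ((hD1 n).compl).inter ((hD2 n).compl)
    have hCm0 : MeasurableSet C := 𝓕.le n _ hCF
    set g : Ω → ℝ := fun ω => B (n + 1) (X (n + 1) ω) with hgdef
    have hg_int : Integrable g ℙ := by
      obtain ⟨C', hC'⟩ := hB_bdd (n + 1)
      exact (integrable_const C').mono' ((hB_meas _).comp (hXm _)).aestronglyMeasurable
        (Filter.Eventually.of_forall fun ω => by simpa using hC' (X (n + 1) ω))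
    -- pointwise decomposition
    have hsplit : ∀ ω, f (n + 1) ω = E.indicator (f n) ω + C.indicator g ω := by
      intro ω
      by_cases h1 : ∃ i, t i ≤ n ∧ (∀ m ≤ t i, X m ω ∉ W) ∧ X (t i) ω ∉ O i
      · have hnE : ω ∉ E := fun hc => hc.1 h1
        have hnC : ω ∉ C := fun hc => hc.1 h1
        rw [Set.indicator_of_notMem hnE, Set.indicator_of_notMem hnC]
        rw [hf]; simp only [ORBFaux]
        rw [if_pos h1]; ring
      · by_cases h2 : ∃ m ≤ n, X m ω ∈ W
        · have hE : ω ∈ E := ⟨h1, h2⟩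
          have hnC : ω ∉ C := fun hc => hc.2 h2
          rw [Set.indicator_of_mem hE, Set.indicator_of_notMem hnC]
          conv_lhs => rw [hf]
          simp only [ORBFaux]
          rw [if_neg h1, if_pos h2, ← hf]; ring
        · have hnE : ω ∉ E := fun hc => h2 hc.2
          have hC : ω ∈ C := ⟨h1, h2⟩
          rw [Set.indicator_of_notMem hnE, Set.indicator_of_mem hC]
          rw [hf]; simp only [ORBFaux]
          rw [if_neg h1, if_neg h2]; ring
    -- the drift condition on C
    have hdrift : ∀ᵐ ω ∂ℙ, ω ∈ C → (ℙ[g | 𝓕 n]) ω ≤ B n (X n ω) := by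
      rcases le_or_gt n (t (Fin.last k)) with hn | hn
      · filter_upwards [h_drift₁ n hn] with ω hω hC
        refine hω ⟨?_, ?_, ?_⟩
        · exact fun hc => hC.2 ⟨n, le_rfl, Or.inl hc⟩
        · exact fun hc => hC.2 ⟨n, le_rfl, Or.inr hc⟩
        · intro i hin
          by_contra hOi
          exact hC.1 ⟨i, hin.le, fun m hm => fun hc => hC.2 ⟨m, hm.trans hin.le, hc⟩,
            by rw [hin]; exact hOi⟩
      · filter_upwards [h_drift₂ n hn] with ω hω hC
        exact hω fun hc => hC.2 ⟨n, le_rfl, hc⟩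
    have hBnX_int : Integrable (fun ω => B n (X n ω)) ℙ := by
      obtain ⟨C', hC'⟩ := hB_bdd n
      exact (integrable_const C').mono' ((hB_meas _).comp (hXm _)).aestronglyMeasurable
        (Filter.Eventually.of_forall fun ω => by simpa using hC' _)
    have hCint : ∫ ω in C, g ω ∂ℙ ≤ ∫ ω in C, f n ω ∂ℙ := by
      have e1 : ∫ ω in C, g ω ∂ℙ = ∫ ω in C, (ℙ[g | 𝓕 n]) ω ∂ℙ :=
        (setIntegral_condExp (𝓕.le n) hg_int hCF).symm
      have e2 : ∫ ω in C, (ℙ[g | 𝓕 n]) ω ∂ℙ ≤ ∫ ω in C, B n (X n ω) ∂ℙ := by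
        refine setIntegral_mono_ae_restrict integrable_condExp.integrableOn
          hBnX_int.integrableOn ?_
        exact (ae_restrict_iff' hCm0).2 hdrift
      have e3 : ∫ ω in C, B n (X n ω) ∂ℙ = ∫ ω in C, f n ω ∂ℙ := by
        refine setIntegral_congr_fun hCm0 fun ω hω => ?_
        refine (hval n ω ?_ ?_).symm
        · exact fun m hm hc => hω.2 ⟨m, hm.le, hc⟩
        · intro i hi
          by_contra hOi
          exact hω.1 ⟨i, hi.le, fun m hm hc => hω.2 ⟨m, hm.trans hi.le, hc⟩, hOi⟩
      rw [e1]
      exact e2.trans (le_of_eq e3)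
    calc ∫ ω, f (n + 1) ω ∂ℙ
        = ∫ ω, (E.indicator (f n) ω + C.indicator g ω) ∂ℙ :=
          integral_congr_ae (Filter.Eventually.of_forall hsplit)
      _ = ∫ ω in E, f n ω ∂ℙ + ∫ ω in C, g ω ∂ℙ := by
          rw [integral_add ((hf_int n).indicator hEm0) (hg_int.indicator hCm0),
            integral_indicator hEm0, integral_indicator hCm0]
      _ ≤ ∫ ω in E, f n ω ∂ℙ + ∫ ω in C, f n ω ∂ℙ := by
          exact add_le_add_right hCint _
      _ = ∫ ω in E ∪ C, f n ω ∂ℙ := by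
          refine (setIntegral_union ?_ hCm0 (hf_int n).integrableOn
            (hf_int n).integrableOn).symm
          exact Set.disjoint_left.2 fun ω hωE hωC => hωC.2 hωE.2
      _ ≤ ∫ ω, f n ω ∂ℙ :=
          setIntegral_le_integral (hf_int n) (Filter.Eventually.of_forall (hf_nonneg n))
  have hmono : ∀ n, ∫ ω, f n ω ∂ℙ ≤ ∫ ω, f 0 ω ∂ℙ := by
    intro n
    induction n with
    | zero => exact le_rfl
    | succ n ih => exact (hstep n).trans ih
  have h0 : ∫ ω, f 0 ω ∂ℙ = B 0 x₀ := by
    have hae : ∀ᵐ ω ∂ℙ, f 0 ω = B 0 x₀ := by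
      filter_upwards [hX0] with ω hω
      rw [hf]; simp only [ORBFaux, hω]
    rw [integral_congr_ae hae, integral_const]; simp
  -- the enlarging measurable event
  set S' : Set Ω := ⋃ m, ⋃ (_ : m ≤ N),
      {ω | (∀ j < m, X j ω ∉ W) ∧ X m ω ∈ U ∧ ∀ i, t i < m → X (t i) ω ∈ O i} with hS'def
  have hS'm : MeasurableSet S' := by
    refine MeasurableSet.iUnion fun m => MeasurableSet.iUnion fun hm => ?_
    have : {ω | (∀ j < m, X j ω ∉ W) ∧ X m ω ∈ U ∧ ∀ i, t i < m → X (t i) ω ∈ O i}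
        = (⋂ j, ⋂ (_ : j < m), X j ⁻¹' Wᶜ) ∩ (X m ⁻¹' U ∩
            ⋂ i, ⋂ (_ : t i < m), X (t i) ⁻¹' (O i)) := by
      ext ω; simp [Set.mem_iInter]
    rw [this]
    refine MeasurableSet.inter ?_ (MeasurableSet.inter ((hXm m) hU) ?_)
    · exact MeasurableSet.iInter fun j => MeasurableSet.iInter fun hj => (hXm j) hWm.compl
    · exact MeasurableSet.iInter fun i => MeasurableSet.iInter fun hi => (hXm (t i)) (hO i)
  -- on S', f N is at least 1
  have hS'f : ∀ ω ∈ S', 1 ≤ f N ω := by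
    intro ω hω
    simp only [hS'def, Set.mem_iUnion, Set.mem_setOf_eq] at hω
    obtain ⟨m, hmN, hno, hXU, hobs⟩ := hω
    have key : ∀ d, f (m + d) ω = B m (X m ω) := by
      intro d
      induction d with
      | zero => exact hval m ω hno hobs
      | succ d ih =>
        have h1 : ¬∃ i, t i ≤ m + d ∧ (∀ m' ≤ t i, X m' ω ∉ W) ∧ X (t i) ω ∉ O i := by
          rintro ⟨i, hi, hnoh, hOi⟩
          have htim : t i < m := by
            by_contra hc
            push_neg at hc
            exact hnoh m hc (Or.inl hXU)
          exact hOi (hobs i htim)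
        have h2 : ∃ m' ≤ m + d, X m' ω ∈ W := ⟨m, Nat.le_add_right m d, Or.inl hXU⟩
        have : f (m + d + 1) ω = f (m + d) ω := by
          conv_lhs => rw [hf]
          simp only [ORBFaux]
          rw [if_neg h1, if_pos h2, ← hf]
        rw [show m + (d + 1) = m + d + 1 from rfl, this, ih]
    have hNm : m + (N - m) = N := Nat.add_sub_cancel' hmN
    have := key (N - m)
    rw [hNm] at this
    rw [this]
    exact h_unsafe m _ hXU
  -- probability bound for S'
  have hPS' : (ℙ S').toReal ≤ p := by
    have h1 : (ℙ S').toReal = ∫ ω, S'.indicator (fun _ => (1 : ℝ)) ω ∂ℙ := by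
      rw [integral_indicator hS'm, setIntegral_const, smul_eq_mul, mul_one]; rfl
    have hind : ∀ ω, S'.indicator (fun _ => (1 : ℝ)) ω ≤ f N ω := by
      intro ω
      by_cases hω : ω ∈ S'
      · rw [Set.indicator_of_mem hω]; exact hS'f ω hω
      · rw [Set.indicator_of_notMem hω]; exact hf_nonneg N ω
    calc (ℙ S').toReal = ∫ ω, S'.indicator (fun _ => (1 : ℝ)) ω ∂ℙ := h1
      _ ≤ ∫ ω, f N ω ∂ℙ :=
          integral_mono ((integrable_const (1 : ℝ)).indicator hS'm) (hf_int N) hind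
      _ ≤ ∫ ω, f 0 ω ∂ℙ := hmono N
      _ = B 0 x₀ := h0
      _ ≤ p := h_init
  -- the goal event is contained in S'
  have hsub : {ω | hitTime X W ω ≤ (N : ℕ∞) ∧
      X ((hitTime X W ω).toNat) ω ∈ U ∧
      ∀ i, (t i : ℕ∞) < hitTime X W ω → X (t i) ω ∈ O i} ⊆ S' := by
    rintro ω ⟨h1, h2, h3⟩
    have hex : ∃ n, X n ω ∈ W := by
      by_contra hc
      push_neg at hc
      have htop : hitTime X W ω = ⊤ := by
        simp only [hitTime]
        simp [hc]
      rw [htop] at h1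
      exact (by simp : ¬((⊤ : ℕ∞) ≤ (N : ℕ∞))) h1
    set m := Nat.find hex with hm
    have hmem : X m ω ∈ W := Nat.find_spec hex
    have hmin : ∀ j < m, X j ω ∉ W := fun j hj => Nat.find_min hex hj
    have hht : hitTime X W ω = (m : ℕ∞) := by
      apply le_antisymm
      · exact iInf₂_le m hmem
      · refine le_iInf fun n => le_iInf fun hn => ?_
        exact_mod_cast Nat.find_min' hex hn
    rw [hht] at h1 h2 h3
    have hmN : m ≤ N := by exact_mod_cast h1
    have hXU : X m ω ∈ U := by simpa using h2
    have hobs : ∀ i, t i < m → X (t i) ω ∈ O i := fun i hi => h3 i (by exact_mod_cast hi)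
    simp only [hS'def, Set.mem_iUnion, Set.mem_setOf_eq]
    exact ⟨m, hmN, hmin, hXU, hobs⟩
  calc ℙ {ω | hitTime X W ω ≤ (N : ℕ∞) ∧
          X ((hitTime X W ω).toNat) ω ∈ U ∧
          ∀ i, (t i : ℕ∞) < hitTime X W ω → X (t i) ω ∈ O i}
      ≤ ℙ S' := measure_mono hsub
    _ ≤ ENNReal.ofReal p := by
        rw [ENNReal.le_ofReal_iff_toReal_le (measure_ne_top ℙ S') hp0]
        exact hPS'
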